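/- arXiv:1810.04623 — 2 statements merged into one kernel-verified Lean document; each statement's English description precedes it below -/
import Mathlib

section
/- For every α > 0 and x > 0, the derivative of the standardized call function satisfies χ_α'(x) = (α/√(2π)) · exp(−(α²/8)(x − 1/x)²). -/
open Real Filter Set

noncomputable def stdNormalCDF (x : ℝ) : ℝ :=
  (Real.sqrt (2 * Real.pi))⁻¹ * ∫ t in Set.Iic x, Real.exp (-t ^ 2 / 2)

noncomputable def chi (α x : ℝ) : ℝ :=
  stdNormalCDF (α / 2 * (x - 1 / x)) -
    Real.exp (α ^ 2 / 2) * stdNormalCDF (-(α / 2) * (x + 1 / x))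

lemma gauss_integrable : MeasureTheory.Integrable (fun t : ℝ => Real.exp (-t ^ 2 / 2)) := by
  have h := integrable_exp_neg_mul_sq (by norm_num : (0:ℝ) < 1/2)
  convert h using 2 with t
  ring_nf

lemma hasDerivAt_stdNormalCDF (x : ℝ) :
    HasDerivAt stdNormalCDF ((Real.sqrt (2 * Real.pi))⁻¹ * Real.exp (-x ^ 2 / 2)) x := by
  have hcont : Continuous fun t : ℝ => Real.exp (-t ^ 2 / 2) := by continuity
  have h1 : HasDerivAt (fun u => ∫ t in (0:ℝ)..u, Real.exp (-t ^ 2 / 2))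
      (Real.exp (-x ^ 2 / 2)) x := (hcont.integral_hasStrictDerivAt 0 x).hasDerivAt
  have h2 : HasDerivAt (fun u => (Real.sqrt (2 * Real.pi))⁻¹ *
      ((∫ t in Set.Iic (0:ℝ), Real.exp (-t ^ 2 / 2)) + ∫ t in (0:ℝ)..u, Real.exp (-t ^ 2 / 2)))
      ((Real.sqrt (2 * Real.pi))⁻¹ * Real.exp (-x ^ 2 / 2)) x :=
    ((h1.const_add _).const_mul _)
  refine h2.congr_of_eventuallyEq (Eventually.of_forall fun u => ?_)
  unfold stdNormalCDF
  congr 1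
  rw [← intervalIntegral.integral_Iic_sub_Iic gauss_integrable.integrableOn
    gauss_integrable.integrableOn]
  ring

theorem chi_deriv (α : ℝ) (hα : 0 < α) (x : ℝ) (hx : 0 < x) :
    HasDerivAt (chi α)
      (α / Real.sqrt (2 * Real.pi) * Real.exp (-(α ^ 2 / 8) * (x - 1 / x) ^ 2)) x := by
  have hx' : x ≠ 0 := hx.ne'
  have hinv : HasDerivAt (fun y : ℝ => 1 / y) (-(1 / x ^ 2)) x := by
    simpa [one_div] using hasDerivAt_inv hx'
  have hu : HasDerivAt (fun y : ℝ => α / 2 * (y - 1 / y))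
      (α / 2 * (1 - -(1 / x ^ 2))) x := ((hasDerivAt_id x).sub hinv).const_mul _
  have hv : HasDerivAt (fun y : ℝ => -(α / 2) * (y + 1 / y))
      (-(α / 2) * (1 + -(1 / x ^ 2))) x := ((hasDerivAt_id x).add hinv).const_mul _
  have h1 := (hasDerivAt_stdNormalCDF (α / 2 * (x - 1 / x))).comp x hu
  have h2 := ((hasDerivAt_stdNormalCDF (-(α / 2) * (x + 1 / x))).comp x hv).const_mul
    (Real.exp (α ^ 2 / 2))
  have h := h1.sub h2
  have key : (Real.sqrt (2 * Real.pi))⁻¹ * Real.exp (-(α / 2 * (x - 1 / x)) ^ 2 / 2) *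
        (α / 2 * (1 - -(1 / x ^ 2))) -
      Real.exp (α ^ 2 / 2) * ((Real.sqrt (2 * Real.pi))⁻¹ *
        Real.exp (-(-(α / 2) * (x + 1 / x)) ^ 2 / 2) * (-(α / 2) * (1 + -(1 / x ^ 2)))) =
      α / Real.sqrt (2 * Real.pi) * Real.exp (-(α ^ 2 / 8) * (x - 1 / x) ^ 2) := by
    have hexp : Real.exp (α ^ 2 / 2) * Real.exp (-(-(α / 2) * (x + 1 / x)) ^ 2 / 2) =
        Real.exp (-(α ^ 2 / 8) * (x - 1 / x) ^ 2) := by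
      rw [← Real.exp_add]
      congr 1
      field_simp
      ring
    have hexp2 : Real.exp (-(α / 2 * (x - 1 / x)) ^ 2 / 2) =
        Real.exp (-(α ^ 2 / 8) * (x - 1 / x) ^ 2) := by
      congr 1; ring
    have hC : Real.exp (-(-(α / 2) * (x + 1 / x)) ^ 2 / 2) =
        Real.exp (-(α ^ 2 / 8) * (x - 1 / x) ^ 2) / Real.exp (α ^ 2 / 2) := by
      rw [eq_div_iff (Real.exp_ne_zero _), ← Real.exp_add]
      congr 1
      field_simp
      ring
    rw [hexp2, hC]
    field_simp
    ring
  rw [← key]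
  exact h.congr_of_eventuallyEq (Eventually.of_forall fun u => by simp [chi])
end

section
/- For every α > 0, the constants c₁(α) := χ_α'(1)·[2χ_α(1)(1−χ_α(1)) − (1−2χ_α(1))χ_α'(1)] / (4χ_α(1)²(1−χ_α(1))²) and c₂(α) := (1−2χ_α(1))·χ_α'(1)² / (4χ_α(1)²(1−χ_α(1))²) are both strictly positive. -/
open Real Filter Set MeasureTheory

noncomputable def gauss (t : ℝ) : ℝ := Real.exp (-t ^ 2 / 2)

lemma gauss_cont : Continuous gauss := by
  unfold gauss; fun_prop

lemma gauss_pos (t : ℝ) : 0 < gauss t := Real.exp_pos _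

lemma gauss_integrable_s12 : Integrable gauss := by
  have h : gauss = fun t => Real.exp (-(1/2) * t ^ 2) := by
    funext t; unfold gauss; ring_nf
  rw [h]; exact integrable_exp_neg_mul_sq (by norm_num)

lemma gauss_integral : ∫ t, gauss t = Real.sqrt (2 * π) := by
  have h : gauss = fun t => Real.exp (-(1/2) * t ^ 2) := by
    funext t; unfold gauss; ring_nf
  rw [h, integral_gaussian]
  rw [show π / (1/2:ℝ) = 2 * π by ring]

lemma gauss_even (t : ℝ) : gauss (-t) = gauss t := by unfold gauss; ring_nf

noncomputable def Phi (x : ℝ) : ℝ := ∫ t in Set.Iic x, gauss t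

lemma cdf_eq (x : ℝ) : stdNormalCDF x = (Real.sqrt (2 * π))⁻¹ * Phi x := rfl

lemma hasDerivAt_Phi (x : ℝ) : HasDerivAt Phi (gauss x) x := by
  have key : ∀ y : ℝ, Phi y = Phi 0 + ∫ t in (0:ℝ)..y, gauss t := by
    intro y
    rw [← intervalIntegral.integral_Iic_sub_Iic gauss_integrable_s12.integrableOn
      gauss_integrable_s12.integrableOn]
    unfold Phi; ring
  have h1 : HasDerivAt (fun y => ∫ t in (0:ℝ)..y, gauss t) (gauss x) x :=
    intervalIntegral.integral_hasDerivAt_right gauss_integrable_s12.intervalIntegrable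
      gauss_cont.stronglyMeasurable.stronglyMeasurableAtFilter gauss_cont.continuousAt
  have h2 := (hasDerivAt_const x (Phi 0)).add h1
  simp only [zero_add] at h2
  exact h2.congr_of_eventuallyEq (Filter.Eventually.of_forall fun y => (key y))

lemma Phi_zero : Phi 0 = Real.sqrt (2 * π) / 2 := by
  have hrefl : Phi 0 = ∫ t in Set.Ioi (0:ℝ), gauss t := by
    unfold Phi
    rw [show (0:ℝ) = -0 by norm_num, ← integral_comp_neg_Iic]
    simp [gauss_even]
  have hsplit : Phi 0 + ∫ t in Set.Ioi (0:ℝ), gauss t = Real.sqrt (2 * π) := by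
    rw [← gauss_integral]
    exact intervalIntegral.integral_Iic_add_Ioi gauss_integrable_s12.integrableOn
      gauss_integrable_s12.integrableOn
  linarith [hrefl, hsplit]

lemma Phi_neg (y : ℝ) : Phi (-y) = ∫ t in Set.Ioi y, gauss t := by
  unfold Phi
  rw [show Set.Ioi y = Set.Ioi (-(-y)) by rw [neg_neg], ← integral_comp_neg_Iic]
  simp [gauss_even]

lemma hasDerivAt_cdf (x : ℝ) :
    HasDerivAt stdNormalCDF ((Real.sqrt (2 * π))⁻¹ * gauss x) x :=
  ((hasDerivAt_Phi x).const_mul _).congr_of_eventuallyEq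
    (Filter.Eventually.of_forall fun y => (cdf_eq y))
-- continuation: appended after base
noncomputable def Igauss (x : ℝ) : ℝ := ∫ t in Set.Ioi x, gauss t

lemma Igauss_eq (x : ℝ) : Igauss x = Real.sqrt (2 * π) - Phi x := by
  have hsplit : Phi x + Igauss x = Real.sqrt (2 * π) := by
    rw [← gauss_integral]
    exact intervalIntegral.integral_Iic_add_Ioi gauss_integrable_s12.integrableOn
      gauss_integrable_s12.integrableOn
  linarith

lemma hasDerivAt_Igauss (x : ℝ) : HasDerivAt Igauss (-gauss x) x := by
  have h := (hasDerivAt_const x (Real.sqrt (2 * π))).sub (hasDerivAt_Phi x)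
  simp only [zero_sub] at h
  exact h.congr_of_eventuallyEq (Filter.Eventually.of_forall fun y => (Igauss_eq y))

lemma Igauss_pos (x : ℝ) : 0 < Igauss x := by
  rw [show Igauss x = ∫ t in Set.Ioi x, gauss t from rfl]
  rw [MeasureTheory.setIntegral_pos_iff_support_of_nonneg_ae
    (Filter.Eventually.of_forall fun t => (gauss_pos t).le) gauss_integrable_s12.integrableOn]
  have : Function.support gauss = Set.univ := by
    ext t; simp [Function.support, (gauss_pos t).ne']
  rw [this, Set.univ_inter]
  simp [Real.volume_Ioi]

lemma Igauss_le (x : ℝ) (hx : 0 ≤ x) :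
    Igauss x ≤ Real.exp (-x ^ 2 / 4) * (2 * Real.sqrt π) := by
  have hint4 : Integrable (fun t : ℝ => Real.exp (-(1/4) * t ^ 2)) :=
    integrable_exp_neg_mul_sq (by norm_num)
  have hb : ∀ t ∈ Set.Ioi x, gauss t ≤ Real.exp (-x ^ 2 / 4) * Real.exp (-(1/4) * t ^ 2) := by
    intro t ht
    have htx : x ≤ t := le_of_lt ht
    rw [← Real.exp_add]
    apply Real.exp_le_exp.mpr
    nlinarith [sq_nonneg (t - x), sq_nonneg (t + x)]
  calc Igauss x ≤ ∫ t in Set.Ioi x, Real.exp (-x ^ 2 / 4) * Real.exp (-(1/4) * t ^ 2) := by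
        apply MeasureTheory.setIntegral_mono_on gauss_integrable_s12.integrableOn
          ((hint4.const_mul _).integrableOn) measurableSet_Ioi hb
    _ = Real.exp (-x ^ 2 / 4) * ∫ t in Set.Ioi x, Real.exp (-(1/4) * t ^ 2) := by
        rw [MeasureTheory.integral_const_mul]
    _ ≤ Real.exp (-x ^ 2 / 4) * ∫ t, Real.exp (-(1/4) * t ^ 2) := by
        apply mul_le_mul_of_nonneg_left _ (Real.exp_nonneg _)
        apply MeasureTheory.setIntegral_le_integral hint4
        exact Filter.Eventually.of_forall fun t => Real.exp_nonneg _
    _ = Real.exp (-x ^ 2 / 4) * (2 * Real.sqrt π) := by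
        rw [integral_gaussian]
        congr 1
        rw [show π / (1/4:ℝ) = 4 * π by ring, show (4:ℝ) * π = 2^2 * π by norm_num,
          Real.sqrt_mul (by positivity), Real.sqrt_sq (by norm_num)]

lemma exp_neg_sq_quarter_tendsto :
    Filter.Tendsto (fun x : ℝ => Real.exp (-x ^ 2 / 4)) Filter.atTop (nhds 0) := by
  have hsq : Filter.Tendsto (fun x : ℝ => x ^ 2) Filter.atTop Filter.atTop :=
    tendsto_pow_atTop (by norm_num)
  have h2 : Filter.Tendsto (fun x : ℝ => -x ^ 2 / 4) Filter.atTop Filter.atBot := by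
    have h := tendsto_neg_atTop_atBot.comp (hsq.atTop_div_const (by norm_num : (0:ℝ) < 4))
    simp only [Function.comp_def] at h
    exact h.congr fun x => by ring
  exact Real.tendsto_exp_atBot.comp h2

lemma Igauss_tendsto : Filter.Tendsto Igauss Filter.atTop (nhds 0) := by
  apply tendsto_of_tendsto_of_tendsto_of_le_of_le'
    (tendsto_const_nhds : Filter.Tendsto (fun _ : ℝ => (0:ℝ)) Filter.atTop (nhds 0))
    (by simpa using exp_neg_sq_quarter_tendsto.mul_const (2 * Real.sqrt π))
  · exact Filter.Eventually.of_forall fun x => (Igauss_pos x).le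
  · filter_upwards [Filter.eventually_ge_atTop (0:ℝ)] with x hx
    exact Igauss_le x hx
noncomputable def sfn (x : ℝ) : ℝ := Real.sqrt (x ^ 2 + 2 * π)

noncomputable def ufn (x : ℝ) : ℝ := (sfn x - x) / 2

noncomputable def hfn (x : ℝ) : ℝ := ufn x * gauss x - Igauss x

noncomputable def Pfn (x : ℝ) : ℝ := sfn x * (1 + x ^ 2) - x * (x ^ 2 + 2 * π - 1)

noncomputable def Dq (x : ℝ) : ℝ := 2 * π - 4 * π * (π - 2) * x ^ 2 - 2 * (π - 2) * x ^ 4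

lemma sfn_pos (x : ℝ) : 0 < sfn x := Real.sqrt_pos.mpr (by positivity)

lemma sfn_sq (x : ℝ) : sfn x ^ 2 = x ^ 2 + 2 * π := Real.sq_sqrt (by positivity)

lemma hasDerivAt_sfn (x : ℝ) : HasDerivAt sfn (x / sfn x) x := by
  have hinner : HasDerivAt (fun y : ℝ => y ^ 2 + 2 * π) (2 * x) x := by
    simpa using (hasDerivAt_pow 2 x).add_const (2 * π)
  have h := (Real.hasDerivAt_sqrt (by positivity : x ^ 2 + 2 * π ≠ 0)).comp x hinner
  refine (h.congr_deriv ?_)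
  symm
  have := sfn_pos x
  unfold sfn at *
  field_simp

lemma hasDerivAt_gauss (x : ℝ) : HasDerivAt gauss (-x * gauss x) x := by
  have hinner : HasDerivAt (fun t : ℝ => -t ^ 2 / 2) (-x) x := by
    have := ((hasDerivAt_pow 2 x).neg).div_const 2
    refine (this.congr_deriv ?_)
    ring
  have := (Real.hasDerivAt_exp (-x ^ 2 / 2)).comp x hinner
  refine (this.congr_deriv ?_)
  unfold gauss
  ring

lemma hasDerivAt_hfn (x : ℝ) :
    HasDerivAt hfn (gauss x * Pfn x / (2 * sfn x)) x := by
  have hu : HasDerivAt ufn ((x / sfn x - 1) / 2) x :=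
    ((hasDerivAt_sfn x).sub (hasDerivAt_id x)).div_const 2
  have h := ((hu.mul (hasDerivAt_gauss x)).sub (hasDerivAt_Igauss x))
  refine (h.congr_deriv ?_)
  symm
  have hs := sfn_pos x
  have hs2 := sfn_sq x
  unfold ufn Pfn
  field_simp
  linear_combination (gauss x * x) * hs2

lemma Pfn_pos_of (x : ℝ) (hx : 0 ≤ x) (hD : 0 < Dq x) : 0 < Pfn x := by
  have hs := sfn_pos x
  have hs2 := sfn_sq x
  have hpi := Real.pi_gt_three
  have hB : 0 ≤ x * (x ^ 2 + 2 * π - 1) := mul_nonneg hx (by nlinarith)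
  have hA : 0 < sfn x * (1 + x ^ 2) := mul_pos hs (by positivity)
  have key : (sfn x * (1 + x ^ 2)) ^ 2 - (x * (x ^ 2 + 2 * π - 1)) ^ 2 = Dq x := by
    unfold Dq; linear_combination ((1 + x ^ 2) ^ 2) * hs2
  unfold Pfn
  nlinarith [key, hA, hB, hD]

lemma Pfn_neg_of (x : ℝ) (hx : 0 ≤ x) (hD : Dq x < 0) : Pfn x < 0 := by
  have hs := sfn_pos x
  have hs2 := sfn_sq x
  have hpi := Real.pi_gt_three
  have hB : 0 ≤ x * (x ^ 2 + 2 * π - 1) := mul_nonneg hx (by nlinarith)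
  have hA : 0 < sfn x * (1 + x ^ 2) := mul_pos hs (by positivity)
  have key : (sfn x * (1 + x ^ 2)) ^ 2 - (x * (x ^ 2 + 2 * π - 1)) ^ 2 = Dq x := by
    unfold Dq; linear_combination ((1 + x ^ 2) ^ 2) * hs2
  unfold Pfn
  nlinarith [key, hA, hB, hD]

lemma Dq_anti {a b : ℝ} (ha : 0 ≤ a) (hab : a < b) : Dq b < Dq a := by
  have hpi := Real.pi_gt_three
  have h2 : a ^ 2 < b ^ 2 := by nlinarith
  have h4 : a ^ 4 ≤ b ^ 4 := by nlinarith [sq_nonneg a, sq_nonneg b]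
  unfold Dq
  nlinarith [mul_pos (show (0:ℝ) < 4 * π * (π - 2) by nlinarith) (sub_pos.2 h2),
    mul_nonneg (show (0:ℝ) ≤ 2 * (π - 2) by nlinarith) (sub_nonneg.2 h4)]
lemma hfn_zero : hfn 0 = 0 := by
  have h1 : sfn 0 = Real.sqrt (2 * π) := by unfold sfn; norm_num
  have h2 : gauss 0 = 1 := by unfold gauss; norm_num
  have h3 : Igauss 0 = Real.sqrt (2 * π) / 2 := by
    rw [Igauss_eq, Phi_zero]; ring
  unfold hfn ufn
  rw [h1, h2, h3]; ring

lemma gauss_tendsto : Filter.Tendsto gauss Filter.atTop (nhds 0) := by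
  have hsq : Filter.Tendsto (fun x : ℝ => x ^ 2) Filter.atTop Filter.atTop :=
    tendsto_pow_atTop (by norm_num)
  have h2 : Filter.Tendsto (fun x : ℝ => -x ^ 2 / 2) Filter.atTop Filter.atBot := by
    have h := tendsto_neg_atTop_atBot.comp (hsq.atTop_div_const (by norm_num : (0:ℝ) < 2))
    simp only [Function.comp_def] at h
    exact h.congr fun x => by ring
  exact Real.tendsto_exp_atBot.comp h2

lemma ufn_nonneg (x : ℝ) (hx : 0 ≤ x) : 0 ≤ ufn x := by
  have : x ≤ sfn x := by
    nlinarith [sfn_sq x, sfn_pos x, Real.pi_pos]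
  unfold ufn; linarith

lemma ufn_le (x : ℝ) (hx : 0 ≤ x) : ufn x ≤ Real.sqrt (2 * π) / 2 := by
  have hsq : sfn x ≤ x + Real.sqrt (2 * π) := by
    rw [show x + Real.sqrt (2 * π) = Real.sqrt ((x + Real.sqrt (2 * π)) ^ 2) by
      rw [Real.sqrt_sq (by positivity)]]
    apply Real.sqrt_le_sqrt
    nlinarith [Real.sq_sqrt (by positivity : (0:ℝ) ≤ 2 * π), Real.sqrt_nonneg (2 * π)]
  unfold ufn; linarith

lemma hfn_tendsto : Filter.Tendsto hfn Filter.atTop (nhds 0) := by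
  have h1 : Filter.Tendsto (fun x => ufn x * gauss x) Filter.atTop (nhds 0) := by
    apply tendsto_of_tendsto_of_tendsto_of_le_of_le'
      (tendsto_const_nhds : Filter.Tendsto (fun _ : ℝ => (0:ℝ)) Filter.atTop (nhds 0))
      (by have := gauss_tendsto.const_mul (Real.sqrt (2 * π) / 2)
          rwa [mul_zero] at this)
    · filter_upwards [Filter.eventually_ge_atTop (0:ℝ)] with x hx
      exact mul_nonneg (ufn_nonneg x hx) (gauss_pos x).le
    · filter_upwards [Filter.eventually_ge_atTop (0:ℝ)] with x hx
      exact mul_le_mul_of_nonneg_right (ufn_le x hx) (gauss_pos x).le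
  have h2 : Filter.Tendsto hfn Filter.atTop (nhds (0 - 0)) := h1.sub Igauss_tendsto
  rwa [sub_zero] at h2

lemma hfn_cont : Continuous hfn :=
  continuous_iff_continuousAt.mpr fun x => (hasDerivAt_hfn x).differentiableAt.continuousAt

lemma hfn_pos {x : ℝ} (hx : 0 < x) : 0 < hfn x := by
  have hpi := Real.pi_gt_three
  -- find the root x₀ of Dq in (0, 2)
  have hD0 : 0 < Dq 0 := by unfold Dq; nlinarith
  have hD2 : Dq 2 < 0 := by unfold Dq; nlinarith
  have hDcont : ContinuousOn Dq (Set.Icc 0 2) := by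
    apply Continuous.continuousOn; unfold Dq; fun_prop
  obtain ⟨x₀, hx₀mem, hx₀⟩ : ∃ x₀ ∈ Set.Icc (0:ℝ) 2, Dq x₀ = 0 := by
    have := intermediate_value_Icc' (by norm_num : (0:ℝ) ≤ 2) hDcont
    have h0 : (0:ℝ) ∈ Set.Icc (Dq 2) (Dq 0) := ⟨hD2.le, hD0.le⟩
    obtain ⟨x₀, hmem, hval⟩ := this h0
    exact ⟨x₀, hmem, hval⟩
  have hx₀pos : 0 < x₀ := by
    rcases lt_or_eq_of_le hx₀mem.1 with h | h
    · exact h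
    · exfalso; rw [← h] at hx₀; linarith
  -- monotone on [0, x₀]
  have hmono : StrictMonoOn hfn (Set.Icc 0 x₀) := by
    apply strictMonoOn_of_deriv_pos (convex_Icc 0 x₀) hfn_cont.continuousOn
    intro y hy
    rw [interior_Icc] at hy
    rw [(hasDerivAt_hfn y).deriv]
    have hDy : 0 < Dq y := by
      have := Dq_anti hy.1.le hy.2
      rw [hx₀] at this; linarith
    exact div_pos (mul_pos (gauss_pos y) (Pfn_pos_of y hy.1.le hDy))
      (by have := sfn_pos y; linarith)
  -- anti on [x₀, ∞)
  have hanti : StrictAntiOn hfn (Set.Ici x₀) := by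
    apply strictAntiOn_of_deriv_neg (convex_Ici x₀) hfn_cont.continuousOn
    intro y hy
    rw [interior_Ici] at hy
    rw [(hasDerivAt_hfn y).deriv]
    have hDy : Dq y < 0 := by
      have := Dq_anti hx₀mem.1 hy
      rw [hx₀] at this; linarith
    have hP := Pfn_neg_of y (le_trans hx₀pos.le (le_of_lt hy)) hDy
    have hg := gauss_pos y
    have hs := sfn_pos y
    apply div_neg_of_neg_of_pos _ (by have := sfn_pos y; linarith)
    exact mul_neg_of_pos_of_neg hg hP
  -- nonneg on [x₀, ∞)
  have htail : ∀ y, x₀ ≤ y → 0 ≤ hfn y := by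
    intro y hy
    apply le_of_tendsto hfn_tendsto
    filter_upwards [Filter.eventually_gt_atTop y] with z hz
    exact (hanti (Set.mem_Ici.mpr hy) (Set.mem_Ici.mpr (le_trans hy hz.le)) hz).le
  rcases le_or_gt x x₀ with h | h
  · have := hmono (Set.mem_Icc.mpr ⟨le_refl 0, hx₀pos.le⟩) (Set.mem_Icc.mpr ⟨hx.le, h⟩) hx
    rw [hfn_zero] at this; exact this
  · have h1 : hfn (x) > hfn (x + 1) :=
      hanti (Set.mem_Ici.mpr h.le) (Set.mem_Ici.mpr (by linarith)) (by linarith)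
    have h2 := htail (x + 1) (by linarith)
    linarith

lemma pollak {α : ℝ} (hα : 0 < α) :
    Real.exp (α ^ 2 / 2) * Igauss α < (sfn α - α) / 2 := by
  have h := hfn_pos hα
  unfold hfn at h
  have key : Igauss α < ufn α * gauss α := by linarith
  have hmul := (mul_lt_mul_of_pos_left key (Real.exp_pos (α ^ 2 / 2)))
  have hgauss : Real.exp (α ^ 2 / 2) * gauss α = 1 := by
    unfold gauss
    rw [← Real.exp_add, show α ^ 2 / 2 + -α ^ 2 / 2 = 0 by ring, Real.exp_zero]
  calc Real.exp (α ^ 2 / 2) * Igauss α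
      < Real.exp (α ^ 2 / 2) * (ufn α * gauss α) := hmul
    _ = ufn α * (Real.exp (α ^ 2 / 2) * gauss α) := by ring
    _ = ufn α := by rw [hgauss]; ring
    _ = (sfn α - α) / 2 := rfl
lemma cdf_zero : stdNormalCDF 0 = 1 / 2 := by
  rw [cdf_eq, Phi_zero]
  have h : Real.sqrt (2 * π) ≠ 0 := by positivity
  field_simp

lemma cdf_neg (y : ℝ) : stdNormalCDF (-y) = (Real.sqrt (2 * π))⁻¹ * Igauss y := by
  rw [cdf_eq, Phi_neg]; rfl

theorem c1_c2_pos (α : ℝ) (hα : 0 < α) :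
    0 < deriv (chi α) 1 *
          (2 * chi α 1 * (1 - chi α 1) - (1 - 2 * chi α 1) * deriv (chi α) 1) /
        (4 * chi α 1 ^ 2 * (1 - chi α 1) ^ 2) ∧
      0 < (1 - 2 * chi α 1) * deriv (chi α) 1 ^ 2 /
        (4 * chi α 1 ^ 2 * (1 - chi α 1) ^ 2) := by
  set c : ℝ := (Real.sqrt (2 * π))⁻¹ with hc
  have hcpos : 0 < c := by positivity
  have hc2 : c ^ 2 * (2 * π) = 1 := by
    rw [hc]
    rw [show ((Real.sqrt (2*π))⁻¹) ^ 2 = ((Real.sqrt (2*π)) ^ 2)⁻¹ by rw [inv_pow]]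
    rw [Real.sq_sqrt (by positivity : (0:ℝ) ≤ 2 * π)]
    field_simp
  -- value of chi α 1
  have harg1 : α / 2 * (1 - 1 / 1 : ℝ) = 0 := by norm_num
  have harg2 : -(α / 2) * (1 + 1 / 1 : ℝ) = -α := by ring
  set A : ℝ := Real.exp (α ^ 2 / 2) * stdNormalCDF (-α) with hA
  have hchi1 : chi α 1 = 1 / 2 - A := by
    unfold chi
    rw [harg1, harg2, cdf_zero, hA]
  -- A in terms of Igauss
  have hA_eq : A = c * (Real.exp (α ^ 2 / 2) * Igauss α) := by
    rw [hA, cdf_neg]; ring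
  have hApos : 0 < A := by
    rw [hA_eq]
    exact mul_pos hcpos (mul_pos (Real.exp_pos _) (Igauss_pos α))
  -- the Pollak bound
  have hM : 2 * A < c * (sfn α - α) := by
    have hp := pollak hα
    have := mul_lt_mul_of_pos_left hp hcpos
    rw [hA_eq]; nlinarith
  have hsge : α ≤ sfn α := by nlinarith [sfn_sq α, sfn_pos α, Real.pi_pos]
  have hMnn : 0 ≤ c * (sfn α - α) := mul_nonneg hcpos.le (by linarith)
  have hkey : (2 * A) ^ 2 + 2 * (α * c) * (2 * A) < 1 := by
    have h1 : (2 * A) ^ 2 < (c * (sfn α - α)) ^ 2 := by nlinarith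
    have h2 : 2 * (α * c) * (2 * A) < 2 * (α * c) * (c * (sfn α - α)) :=
      mul_lt_mul_of_pos_left hM (by positivity)
    have hid : (c * (sfn α - α)) ^ 2 + 2 * (α * c) * (c * (sfn α - α)) = 1 := by
      have hs2 := sfn_sq α
      calc (c * (sfn α - α)) ^ 2 + 2 * (α * c) * (c * (sfn α - α))
          = c ^ 2 * (sfn α ^ 2 - α ^ 2) := by ring
        _ = c ^ 2 * (2 * π) := by rw [hs2]; ring
        _ = 1 := hc2
    linarith
  have hA_lt : A < 1 / 2 := by nlinarith [mul_pos (mul_pos hα hcpos) hApos]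
  -- derivative of chi at 1
  have hinv : HasDerivAt (fun x : ℝ => 1 / x) (-1) 1 := by
    have := hasDerivAt_inv (one_ne_zero : (1:ℝ) ≠ 0)
    simp only [one_div]
    refine (this.congr_deriv ?_)
    norm_num
  have hg : HasDerivAt (fun x : ℝ => α / 2 * (x - 1 / x)) α 1 := by
    have h := ((hasDerivAt_id 1).sub hinv).const_mul (α / 2)
    refine (h.congr_deriv ?_)
    ring
  have hh : HasDerivAt (fun x : ℝ => -(α / 2) * (x + 1 / x)) 0 1 := by
    have h := ((hasDerivAt_id 1).add hinv).const_mul (-(α / 2))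
    refine (h.congr_deriv ?_)
    ring
  have hcdf0 : HasDerivAt stdNormalCDF (c * gauss 0) (α / 2 * (1 - 1 / 1)) := by
    rw [harg1]; exact hasDerivAt_cdf 0
  have hcdfα : HasDerivAt stdNormalCDF (c * gauss (-α)) (-(α / 2) * (1 + 1 / 1)) := by
    rw [harg2]; exact hasDerivAt_cdf (-α)
  have hcomp1 : HasDerivAt (fun x : ℝ => stdNormalCDF (α / 2 * (x - 1 / x)))
      (c * gauss 0 * α) 1 := HasDerivAt.comp (h₂ := stdNormalCDF) 1 hcdf0 hg
  have hcomp2 : HasDerivAt (fun x : ℝ => stdNormalCDF (-(α / 2) * (x + 1 / x)))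
      (c * gauss (-α) * 0) 1 := HasDerivAt.comp (h₂ := stdNormalCDF) 1 hcdfα hh
  have hchi : HasDerivAt (chi α) (α * c) 1 := by
    have h := hcomp1.sub (hcomp2.const_mul (Real.exp (α ^ 2 / 2)))
    have hg0 : gauss 0 = 1 := by unfold gauss; norm_num
    have : c * gauss 0 * α - Real.exp (α ^ 2 / 2) * (c * gauss (-α) * 0) = α * c := by
      rw [hg0]; ring
    rw [this] at h
    exact h
  have hderiv : deriv (chi α) 1 = α * c := hchi.deriv
  -- final arithmetic
  rw [hchi1, hderiv]
  have hχ : (0:ℝ) < 1 / 2 - A := by linarith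
  have h1χ : (0:ℝ) < 1 - (1 / 2 - A) := by linarith
  have hden : (0:ℝ) < 4 * (1 / 2 - A) ^ 2 * (1 - (1 / 2 - A)) ^ 2 := by positivity
  have hac : (0:ℝ) < α * c := by positivity
  constructor
  · apply div_pos _ hden
    have hbr : (0:ℝ) < 1 - (2 * A) ^ 2 - 2 * (α * c) * (2 * A) := by linarith
    nlinarith [mul_pos hac hbr]
  · apply div_pos _ hden
    have : (0:ℝ) < 1 - 2 * (1 / 2 - A) := by linarith
    nlinarith [mul_pos this (mul_pos hac hac)]
end
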